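/- Let T : C → C be k-strictly pseudocontractive, α ∈ (k, 1), x ∈ C, and x' = α x + (1 − α) T x. Then ‖x' − T x'‖ ≤ ‖x − T x‖, i.e., the residual sequence of the Mann iteration with constant parameter in (k, 1) is decreasing. -/

import Mathlib

theorem mann_residual_decreasing
    {H : Type*} [NormedAddCommGroup H] [InnerProductSpace ℝ H] [CompleteSpace H]
    (C : Set H) (hC : Convex ℝ C) (T : H → H) (hT : Set.MapsTo T C C)
    (k : ℝ) (hk0 : 0 ≤ k) (hk1 : k < 1)
    (hspc : ∀ x ∈ C, ∀ y ∈ C,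
      ‖T x - T y‖ ^ 2 ≤ ‖x - y‖ ^ 2 + k * ‖x - y - (T x - T y)‖ ^ 2)
    (α : ℝ) (hαk : k < α) (hα1 : α < 1)
    (x : H) (hx : x ∈ C) (x' : H) (hx' : x' = α • x + (1 - α) • T x) :
    ‖x' - T x'‖ ≤ ‖x - T x‖ := by
  have hα0 : (0:ℝ) ≤ α := le_of_lt (lt_of_le_of_lt hk0 hαk)
  have hx'C : x' ∈ C := by
    rw [hx']
    exact hC hx (hT hx) hα0 (by linarith) (by ring)
  set r : H := x - T x with hr
  set d : H := T x - T x' with hd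
  have h1 : x - x' = (1 - α) • r := by rw [hx', hr]; module
  have h2a : x' - T x = α • r := by rw [hx', hr]; module
  have h2 : x' - T x' = α • r + d := by rw [← h2a, hd]; abel
  have hspc' := hspc x hx x' hx'C
  rw [h1, ← hd] at hspc'
  set R := ‖r‖ with hR
  set D := ‖d‖ with hD
  set t : ℝ := inner ℝ r d with ht
  have hcs : t ≤ R * D := real_inner_le_norm r d
  have e1 : ‖(1 - α) • r‖ ^ 2 = (1 - α) ^ 2 * R ^ 2 := by
    rw [norm_smul]
    simp [abs_of_nonneg (by linarith : (0:ℝ) ≤ 1 - α)]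
    ring
  have e2 : ‖(1 - α) • r - d‖ ^ 2 = (1 - α) ^ 2 * R ^ 2 - 2 * (1 - α) * t + D ^ 2 := by
    rw [norm_sub_sq_real, e1, real_inner_smul_left]
    ring
  have e3 : ‖α • r + d‖ ^ 2 = α ^ 2 * R ^ 2 + 2 * α * t + D ^ 2 := by
    rw [norm_add_sq_real, norm_smul, real_inner_smul_left]
    simp [abs_of_nonneg hα0]
    ring
  rw [e1, e2] at hspc'
  -- hspc' : D ^ 2 ≤ (1-α)^2 R^2 + k * ((1-α)^2 R^2 - 2(1-α) t + D^2)
  have hDR : D ^ 2 = ‖d‖ ^ 2 := rfl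
  have hgoal : ‖x' - T x'‖ ^ 2 ≤ R ^ 2 := by
    rw [h2, e3]
    have hRn : 0 ≤ R := norm_nonneg r
    have hDn : 0 ≤ D := norm_nonneg d
    rcases le_or_gt D ((1 - α) * R) with hcase | hcase
    · nlinarith [mul_nonneg hRn hDn, mul_nonneg hα0 hRn]
    · nlinarith [mul_le_mul_of_nonneg_left hspc' hα0,
        mul_pos (sub_pos.mpr hαk) (sub_pos.mpr hα1),
        mul_nonneg hRn hDn]
  nlinarith [norm_nonneg (x' - T x'), norm_nonneg (x - T x), hgoal]
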